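/- Let C_p denote the set of critical points of E₀ and, for μ ≥ 0, let S_μ^loc denote the set of local minimizers of E_μ. For every ε > 0 there exists δ > 0 such that for all μ with 0 ≤ μ < δ, every local minimizer X of E_μ satisfies inf_{Y ∈ C_p} ‖X − Y‖_F < ε. -/

import Mathlib

open Matrix
open scoped ComplexOrder

attribute [local instance] Matrix.frobeniusSeminormedAddCommGroup
  Matrix.frobeniusNormedAddCommGroup Matrix.frobeniusNormedSpace

/-- The OMM functional `E₀(X) = tr[(2I − X*X) X*HX]` (real-valued, since `H` is Hermitian). -/
noncomputable def E0 {N m : ℕ} (H : Matrix (Fin N) (Fin N) ℂ)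
    (X : Matrix (Fin N) (Fin m) ℂ) : ℝ :=
  (((2 : ℂ) • (1 : Matrix (Fin m) (Fin m) ℂ) - Xᴴ * X) * (Xᴴ * H * X)).trace.re

/-- The entrywise ℓ¹ norm `‖X‖₁ = Σ_{i,j} |X_{ij}|`. -/
noncomputable def l1 {N m : ℕ} (X : Matrix (Fin N) (Fin m) ℂ) : ℝ :=
  ∑ i, ∑ j, ‖X i j‖

/-- The penalized OMM functional `E_μ(X) = E₀(X) + μ‖X‖₁`. -/
noncomputable def Emu {N m : ℕ} (H : Matrix (Fin N) (Fin N) ℂ) (μ : ℝ)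
    (X : Matrix (Fin N) (Fin m) ℂ) : ℝ :=
  E0 H X + μ * l1 X

open Filter
open scoped Topology

section l1facts
variable {N m : ℕ}

lemma norm_sq_eq (X : Matrix (Fin N) (Fin m) ℂ) : ‖X‖ ^ 2 = ∑ i, ∑ j, ‖X i j‖ ^ 2 := by
  have h : (0:ℝ) ≤ ∑ i, ∑ j, ‖X i j‖ ^ 2 := by positivity
  rw [Matrix.frobenius_norm_def]
  have he : ∀ (i : Fin N) (j : Fin m), ‖X i j‖ ^ (2:ℝ) = ‖X i j‖ ^ (2:ℕ) :=
    fun i j => Real.rpow_natCast _ 2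
  simp_rw [he]
  rw [← Real.rpow_natCast _ 2, ← Real.rpow_mul h]
  norm_num

lemma entry_le_norm (X : Matrix (Fin N) (Fin m) ℂ) (i : Fin N) (j : Fin m) :
    ‖X i j‖ ≤ ‖X‖ := by
  have h1 : ‖X i j‖ ^ 2 ≤ ‖X‖ ^ 2 := by
    rw [norm_sq_eq]
    calc ‖X i j‖ ^ 2 ≤ ∑ j', ‖X i j'‖ ^ 2 :=
          Finset.single_le_sum (f := fun j' => ‖X i j'‖ ^ 2)
            (fun _ _ => by positivity) (Finset.mem_univ j)
      _ ≤ ∑ i', ∑ j', ‖X i' j'‖ ^ 2 :=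
          Finset.single_le_sum (f := fun i' => ∑ j', ‖X i' j'‖ ^ 2)
            (fun _ _ => by positivity) (Finset.mem_univ i)
  have h2 := Real.sqrt_le_sqrt h1
  rw [Real.sqrt_sq (norm_nonneg _), Real.sqrt_sq (norm_nonneg _)] at h2
  simpa using h2

lemma l1_le (X : Matrix (Fin N) (Fin m) ℂ) : l1 X ≤ (N * m : ℝ) * ‖X‖ := by
  calc l1 X ≤ ∑ _i : Fin N, ∑ _j : Fin m, ‖X‖ := by
        exact Finset.sum_le_sum fun i _ => Finset.sum_le_sum fun j _ => entry_le_norm X i j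
    _ = (N * m : ℝ) * ‖X‖ := by simp [Finset.sum_const, mul_assoc]

lemma l1_nonneg (X : Matrix (Fin N) (Fin m) ℂ) : 0 ≤ l1 X :=
  Finset.sum_nonneg fun _ _ => Finset.sum_nonneg fun _ _ => norm_nonneg _

lemma l1_add_le (X Y : Matrix (Fin N) (Fin m) ℂ) : l1 (X + Y) ≤ l1 X + l1 Y := by
  simp only [l1]
  rw [← Finset.sum_add_distrib]
  refine Finset.sum_le_sum fun i _ => ?_
  rw [← Finset.sum_add_distrib]
  exact Finset.sum_le_sum fun j _ => by simpa using norm_add_le _ _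

lemma l1_smul (t : ℝ) (X : Matrix (Fin N) (Fin m) ℂ) : l1 (t • X) = |t| * l1 X := by
  simp [l1, Finset.mul_sum, Complex.norm_real, abs_mul,
    Complex.real_smul, _root_.map_mul]

end l1facts

section smooth
variable {a b c : ℕ}

/-- conjTranspose as an ℝ-linear continuous map. -/
noncomputable def ctCLM (a b : ℕ) : Matrix (Fin a) (Fin b) ℂ →L[ℝ] Matrix (Fin b) (Fin a) ℂ :=
  LinearMap.toContinuousLinearMap
  { toFun := fun X => Xᴴ
    map_add' := fun X Y => Matrix.conjTranspose_add X Y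
    map_smul' := fun r X => by
      simp [Matrix.conjTranspose_smul] }

lemma mul_isBBM (a b c : ℕ) : IsBoundedBilinearMap ℝ
    (fun p : (Matrix (Fin a) (Fin b) ℂ) × (Matrix (Fin b) (Fin c) ℂ) => p.1 * p.2) where
  add_left := fun A A' B => Matrix.add_mul A A' B
  smul_left := fun r A B => Matrix.smul_mul r A B
  add_right := fun A B B' => Matrix.mul_add A B B'
  smul_right := fun r A B => Matrix.mul_smul A r B
  bound := ⟨1, one_pos, fun A B => by simpa using Matrix.frobenius_norm_mul A B⟩

noncomputable def traceCLM (a : ℕ) : Matrix (Fin a) (Fin a) ℂ →L[ℝ] ℂ :=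
  LinearMap.toContinuousLinearMap ((Matrix.traceLinearMap (Fin a) ℂ ℂ).restrictScalars ℝ)

lemma contDiff_E0 {N m : ℕ} (H : Matrix (Fin N) (Fin N) ℂ) :
    ContDiff ℝ 1 (E0 (m := m) H) := by
  have h1 : ContDiff ℝ 1 (fun X : Matrix (Fin N) (Fin m) ℂ => Xᴴ * X) :=
    (mul_isBBM m N m).contDiff.comp ((ctCLM N m).contDiff.prodMk contDiff_id)
  have h2 : ContDiff ℝ 1 (fun X : Matrix (Fin N) (Fin m) ℂ => Xᴴ * H * X) :=
    (mul_isBBM m N m).contDiff.comp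
      (((mul_isBBM m N N).contDiff.comp ((ctCLM N m).contDiff.prodMk contDiff_const)).prodMk
        contDiff_id)
  have h3 : ContDiff ℝ 1 (fun X : Matrix (Fin N) (Fin m) ℂ =>
      ((2 : ℂ) • (1 : Matrix (Fin m) (Fin m) ℂ) - Xᴴ * X) * (Xᴴ * H * X)) :=
    (mul_isBBM m m m).contDiff.comp ((contDiff_const.sub h1).prodMk h2)
  exact Complex.reCLM.contDiff.comp ((traceCLM m).contDiff.comp h3)

end smooth

section scaling
variable {N m : ℕ}

lemma E0_smul (H : Matrix (Fin N) (Fin N) ℂ) (X : Matrix (Fin N) (Fin m) ℂ) (s : ℝ) :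
    E0 H (s • X) = s ^ 2 * (2 * (Xᴴ * H * X).trace.re)
      - s ^ 4 * ((Xᴴ * X * (Xᴴ * H * X)).trace.re) := by
  have hct : (s • X)ᴴ = s • Xᴴ := by
    rw [Matrix.conjTranspose_smul]; simp
  simp only [E0, hct, Matrix.smul_mul, Matrix.mul_smul, sub_mul, Matrix.smul_mul,
    smul_smul, Matrix.trace_sub, Matrix.trace_smul, Complex.sub_re]
  simp [Complex.real_smul, smul_eq_mul, Complex.mul_re]
  ring

end scaling

/-- the operator norm on ℝ-linear functionals on matrices (for the product topology). -/
@[reducible] noncomputable def clmNAG {N m : ℕ} :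
    NormedAddCommGroup (Matrix (Fin N) (Fin m) ℂ →L[ℝ] ℝ) :=
  ContinuousLinearMap.toNormedAddCommGroup

section grad
variable {N m : ℕ}
attribute [local instance] clmNAG

lemma grad_bound (H : Matrix (Fin N) (Fin N) ℂ) (μ : ℝ) (hμ : 0 ≤ μ)
    (X : Matrix (Fin N) (Fin m) ℂ) (hX : IsLocalMin (Emu H μ) X) :
    ‖fderiv ℝ (E0 H) X‖ ≤ μ * (N * m : ℝ) := by
  have hdiff : Differentiable ℝ (E0 (m := m) H) := (contDiff_E0 H).differentiable one_ne_zero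
  have key : ∀ V : Matrix (Fin N) (Fin m) ℂ,
      -(μ * (N * m : ℝ) * ‖V‖) ≤ fderiv ℝ (E0 H) X V := by
    intro V
    have h₁ : HasDerivAt (fun t : ℝ => X + t • V) V 0 := by
      exact (((hasDerivAt_id (0:ℝ)).smul_const V).const_add X).congr_deriv (one_smul ℝ V)
    have hc : HasDerivAt (fun t : ℝ => E0 H (X + t • V)) (fderiv ℝ (E0 H) X V) 0 := by
      have h₂ := (hdiff X).hasFDerivAt
      have h₃ : HasFDerivAt (E0 H) (fderiv ℝ (E0 H) X) (X + (0:ℝ) • V) := by simpa using h₂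
      exact h₃.comp_hasDerivAt 0 h₁
    have hts : Tendsto (slope (fun t : ℝ => E0 H (X + t • V)) 0) (𝓝[>] 0)
        (𝓝 (fderiv ℝ (E0 H) X V)) :=
      (hasDerivAt_iff_tendsto_slope.mp hc).mono_left
        (nhdsWithin_mono 0 (fun t ht => ne_of_gt ht))
    refine ge_of_tendsto hts ?_
    have htd : Tendsto (fun t : ℝ => X + t • V) (𝓝 0) (𝓝 X) := by
      have hcont : Continuous fun t : ℝ => X + t • V := by continuity
      simpa using hcont.tendsto 0
    have hev : ∀ᶠ t in 𝓝[>] (0:ℝ), Emu H μ X ≤ Emu H μ (X + t • V) :=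
      (htd.eventually hX).filter_mono nhdsWithin_le_nhds
    filter_upwards [hev, self_mem_nhdsWithin] with t hEt (ht : (0:ℝ) < t)
    have hl1 : l1 (X + t • V) ≤ l1 X + t * ((N * m : ℝ) * ‖V‖) := by
      calc l1 (X + t • V) ≤ l1 X + l1 (t • V) := l1_add_le X (t • V)
        _ = l1 X + |t| * l1 V := by rw [l1_smul]
        _ ≤ l1 X + t * ((N * m : ℝ) * ‖V‖) := by
            rw [abs_of_pos ht]
            have := l1_le V
            nlinarith [l1_nonneg V]
    have hE : E0 H X - μ * (t * ((N * m : ℝ) * ‖V‖)) ≤ E0 H (X + t • V) := by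
      have := hEt
      simp only [Emu] at this
      nlinarith
    rw [slope_def_field]
    simp only [zero_smul, add_zero, sub_zero]
    rw [le_div_iff₀ ht]
    nlinarith [hE]
  refine ContinuousLinearMap.opNorm_le_bound _ (by positivity) fun V => ?_
  rw [Real.norm_eq_abs, abs_le]
  constructor
  · have := key V
    exact this
  · have h := key (-V)
    rw [map_neg, norm_neg] at h
    exact neg_le_neg_iff.mp h

lemma fderiv_self (H : Matrix (Fin N) (Fin N) ℂ) (X : Matrix (Fin N) (Fin m) ℂ) :
    fderiv ℝ (E0 H) X X
      = 4 * (Xᴴ * H * X).trace.re - 4 * ((Xᴴ * X * (Xᴴ * H * X)).trace.re) := by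
  set a := (Xᴴ * H * X).trace.re with ha
  set b := (Xᴴ * X * (Xᴴ * H * X)).trace.re with hb
  have hdiff : Differentiable ℝ (E0 (m := m) H) := (contDiff_E0 H).differentiable one_ne_zero
  have h₁ : HasDerivAt (fun t : ℝ => X + t • X) X 0 := by
    exact (((hasDerivAt_id (0:ℝ)).smul_const X).const_add X).congr_deriv (one_smul ℝ X)
  have hc : HasDerivAt (fun t : ℝ => E0 H (X + t • X)) (fderiv ℝ (E0 H) X X) 0 := by
    have h₂ := (hdiff X).hasFDerivAt
    have h₃ : HasFDerivAt (E0 H) (fderiv ℝ (E0 H) X) (X + (0:ℝ) • X) := by simpa using h₂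
    exact h₃.comp_hasDerivAt 0 h₁
  have heq : (fun t : ℝ => E0 H (X + t • X))
      = fun t => (1+t)^2 * (2*a) - (1+t)^4 * b := by
    funext t
    rw [show X + t • X = ((1+t) : ℝ) • X by rw [add_smul, one_smul], E0_smul]
  rw [heq] at hc
  have hid : HasDerivAt (fun t : ℝ => 1 + t) 1 0 := by
    simpa using (hasDerivAt_id (0:ℝ)).const_add 1
  have hg := ((hid.pow 2).mul_const (2*a)).sub ((hid.pow 4).mul_const b)
  have huniq := hc.unique hg
  rw [huniq]
  push_cast
  ring

end grad

section quad
variable {N : ℕ}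

/-- the real part of the quadratic form of `A` at `v`. -/
noncomputable def Qf (A : Matrix (Fin N) (Fin N) ℂ) (v : Fin N → ℂ) : ℝ :=
  (star v ⬝ᵥ A *ᵥ v).re

/-- squared ℓ² norm of a vector. -/
noncomputable def n2 (v : Fin N → ℂ) : ℝ := ∑ i, ‖v i‖ ^ 2

lemma n2_nonneg (v : Fin N → ℂ) : 0 ≤ n2 v := Finset.sum_nonneg fun _ _ => by positivity

lemma n2_eq_zero {v : Fin N → ℂ} (h : n2 v = 0) : v = 0 := by
  funext i
  have h2 : ∀ j ∈ Finset.univ, (0:ℝ) ≤ ‖v j‖ ^ 2 := fun _ _ => by positivity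
  have := (Finset.sum_eq_zero_iff_of_nonneg h2).mp h i (Finset.mem_univ i)
  simpa using this

lemma Qf_continuous (A : Matrix (Fin N) (Fin N) ℂ) : Continuous (Qf A) := by
  have : Qf A = fun v => (∑ i, (starRingEnd ℂ) (v i) * ∑ k, A i k * v k).re := by
    funext v
    simp [Qf, dotProduct, Matrix.mulVec]
  rw [this]
  refine Complex.continuous_re.comp (continuous_finset_sum _ fun i _ => Continuous.mul ?_
    (continuous_finset_sum _ fun k _ => continuous_const.mul (continuous_apply k)))
  exact Complex.continuous_conj.comp (continuous_apply i)

lemma n2_continuous : Continuous (n2 (N := N)) := by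
  unfold n2; fun_prop

lemma Qf_smul (A : Matrix (Fin N) (Fin N) ℂ) (r : ℝ) (v : Fin N → ℂ) :
    Qf A (r • v) = r ^ 2 * Qf A v := by
  have hv : r • v = (r : ℂ) • v := by funext i; simp [Complex.real_smul]
  rw [Qf, hv, star_smul, smul_dotProduct, Matrix.mulVec_smul, dotProduct_smul]
  rw [smul_smul]
  simp only [smul_eq_mul, Complex.star_def, Complex.conj_ofReal]
  rw [show ((r:ℂ) * (r:ℂ)) = ((r^2 : ℝ) : ℂ) by push_cast; ring]
  rw [Qf, Complex.re_ofReal_mul]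

lemma n2_smul (r : ℝ) (v : Fin N → ℂ) : n2 (r • v) = r ^ 2 * n2 v := by
  simp only [n2, Pi.smul_apply, norm_smul, Finset.mul_sum, Real.norm_eq_abs]
  refine Finset.sum_congr rfl fun i _ => by rw [mul_pow, sq_abs]

lemma quad_bounds (hN : 0 < N) (A : Matrix (Fin N) (Fin N) ℂ) (hA : A.PosDef) :
    ∃ c₀ : ℝ, 0 < c₀ ∧ ∃ c₁ : ℝ, ∀ v : Fin N → ℂ,
      c₀ * n2 v ≤ Qf A v ∧ Qf A v ≤ c₁ * n2 v := by
  classical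
  set S : Set (Fin N → ℂ) := {v | n2 v = 1} with hS
  have hSc : IsCompact S := by
    have hclosed : IsClosed S := isClosed_eq n2_continuous continuous_const
    have hsub : S ⊆ Metric.closedBall 0 1 := by
      intro v hv
      rw [Metric.mem_closedBall, dist_zero_right]
      rw [pi_norm_le_iff_of_nonneg (by norm_num)]
      intro i
      have h1 : ‖v i‖ ^ 2 ≤ 1 := by
        rw [← hv]
        exact Finset.single_le_sum (f := fun j => ‖v j‖ ^ 2)
          (fun _ _ => by positivity) (Finset.mem_univ i)
      nlinarith [norm_nonneg (v i)]
    exact (isCompact_closedBall 0 1).of_isClosed_subset hclosed hsub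
  have hSne : S.Nonempty := by
    refine ⟨fun i => if i = ⟨0, hN⟩ then 1 else 0, ?_⟩
    simp [hS, n2, apply_ite]
  obtain ⟨v₀, hv₀S, hmin⟩ := hSc.exists_isMinOn hSne (Qf_continuous A).continuousOn
  obtain ⟨v₁, hv₁S, hmax⟩ := hSc.exists_isMaxOn hSne (Qf_continuous A).continuousOn
  have hc₀pos : 0 < Qf A v₀ := by
    have hv₀ne : v₀ ≠ 0 := by
      intro h; rw [hS] at hv₀S; simp [h, n2] at hv₀S
    have := hA.re_dotProduct_pos hv₀ne
    simpa [Qf] using this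
  refine ⟨Qf A v₀, hc₀pos, Qf A v₁, fun v => ?_⟩
  by_cases hv : v = 0
  · simp [hv, Qf, n2]
  · have hn2 : 0 < n2 v := by
      rcases lt_or_eq_of_le (n2_nonneg v) with h | h
      · exact h
      · exact absurd (n2_eq_zero h.symm) hv
    set r : ℝ := Real.sqrt (n2 v) with hr
    have hrpos : 0 < r := Real.sqrt_pos.mpr hn2
    have hr2 : r ^ 2 = n2 v := Real.sq_sqrt hn2.le
    have hwS : (r⁻¹ • v) ∈ S := by
      rw [hS, Set.mem_setOf_eq, n2_smul]
      field_simp [hr2]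
      exact hr2.symm
    have h1 := hmin hwS
    have h2 := hmax hwS
    simp only [Set.mem_setOf_eq] at h1 h2
    rw [Qf_smul] at h1 h2
    constructor
    · calc Qf A v₀ * n2 v = (Qf A v₀ * r ^ 2) := by rw [hr2]
        _ ≤ (r⁻¹)^2 * Qf A v * r^2 := by nlinarith
        _ = Qf A v := by field_simp
    · calc Qf A v = (r⁻¹)^2 * Qf A v * r ^ 2 := by field_simp
        _ ≤ Qf A v₁ * r ^ 2 := by nlinarith
        _ = Qf A v₁ * n2 v := by rw [hr2]

end quad

section traceform
variable {N k : ℕ}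

lemma trace_form (A : Matrix (Fin N) (Fin N) ℂ) (B : Matrix (Fin N) (Fin k) ℂ) :
    (Bᴴ * A * B).trace.re = ∑ j, Qf A (fun i => B i j) := by
  have h : (Bᴴ * A * B).trace = ∑ j, (star (fun i => B i j) ⬝ᵥ A *ᵥ (fun i => B i j)) := by
    simp only [Matrix.trace, Matrix.diag, Matrix.mul_apply, dotProduct, Matrix.mulVec,
      Matrix.conjTranspose_apply, Pi.star_apply]
    refine Finset.sum_congr rfl fun j _ => ?_
    simp_rw [Finset.sum_mul, Finset.mul_sum]
    rw [Finset.sum_comm]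
    exact Finset.sum_congr rfl fun i _ => Finset.sum_congr rfl fun l _ => by ring
  rw [h, Complex.re_sum]
  rfl

lemma sum_n2_cols (B : Matrix (Fin N) (Fin k) ℂ) :
    ∑ j, n2 (fun i => B i j) = ∑ i, ∑ j, ‖B i j‖ ^ 2 := by
  rw [Finset.sum_comm]
  rfl

/-- `∑_{ij} |B i j|² = re tr(Bᴴ B)` -/
lemma sum_sq_eq_trace (B : Matrix (Fin N) (Fin k) ℂ) :
    (Bᴴ * B).trace.re = ∑ i, ∑ j, ‖B i j‖ ^ 2 := by
  have h : (Bᴴ * B).trace = ∑ j, ∑ i, ((starRingEnd ℂ) (B i j) * B i j) := by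
    simp [Matrix.trace, Matrix.diag, Matrix.mul_apply, Matrix.conjTranspose_apply]
  rw [h]
  rw [Complex.re_sum]
  rw [Finset.sum_comm]
  refine Finset.sum_congr rfl fun i _ => ?_
  rw [Complex.re_sum]
  refine Finset.sum_congr rfl fun j _ => ?_
  rw [mul_comm, Complex.mul_conj]
  simp [Complex.normSq_eq_norm_sq, ← Complex.ofReal_pow]

end traceform

section bounded
variable {N m : ℕ}
attribute [local instance] clmNAG

set_option maxHeartbeats 1000000 in
/-- Uniform boundedness of local minimizers for small `μ`. -/
lemma minimizer_bound (hN : 0 < N) (hm : 0 < m) (H : Matrix (Fin N) (Fin N) ℂ)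
    {c₀ c₁ : ℝ} (hc₀ : 0 < c₀)
    (hquad : ∀ v : Fin N → ℂ, c₀ * n2 v ≤ Qf (-H) v ∧ Qf (-H) v ≤ c₁ * n2 v)
    (μ : ℝ) (hμ0 : 0 ≤ μ) (hμ1 : μ ≤ 1)
    (X : Matrix (Fin N) (Fin m) ℂ) (hX : IsLocalMin (Emu H μ) X) :
    ‖X‖ ≤ max 1 (Real.sqrt ((m : ℝ) * (4 * c₁ + (N * m : ℝ)) / (4 * c₀))) := by
  set L : ℝ := (N * m : ℝ) with hL
  set a := (Xᴴ * H * X).trace.re with ha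
  set b := (Xᴴ * X * (Xᴴ * H * X)).trace.re with hb
  have hm' : (0:ℝ) < (m:ℝ) := by exact_mod_cast hm
  -- |4a - 4b| ≤ μ L ‖X‖
  have hgb := grad_bound H μ hμ0 X hX
  have h1 : |4*a - 4*b| ≤ μ * L * ‖X‖ := by
    rw [← fderiv_self H X]
    calc |fderiv ℝ (E0 H) X X| = ‖fderiv ℝ (E0 H) X X‖ := (Real.norm_eq_abs _).symm
      _ ≤ ‖fderiv ℝ (E0 H) X‖ * ‖X‖ := (fderiv ℝ (E0 H) X).le_opNorm X
      _ ≤ μ * L * ‖X‖ := by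
          rw [hL]
          exact mul_le_mul_of_nonneg_right hgb (norm_nonneg X)
  -- -a ≤ c₁ ‖X‖²
  have ha' : -a ≤ c₁ * ‖X‖ ^ 2 := by
    have hXneg : Xᴴ * (-H) * X = -(Xᴴ * H * X) := by
      rw [Matrix.mul_neg, Matrix.neg_mul]
    have htf := trace_form (-H) X
    rw [hXneg, Matrix.trace_neg, Complex.neg_re] at htf
    have hsum : ∑ j, Qf (-H) (fun i => X i j) ≤ c₁ * ∑ j, n2 (fun i => X i j) := by
      rw [Finset.mul_sum]
      exact Finset.sum_le_sum fun j _ => (hquad _).2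
    rw [← htf] at hsum
    calc -a = -(Xᴴ * H * X).trace.re := by rw [ha]
      _ ≤ c₁ * ∑ j, n2 (fun i => X i j) := hsum
      _ = c₁ * ‖X‖ ^ 2 := by rw [sum_n2_cols, ← norm_sq_eq]
  -- c₀ * ‖X‖⁴ / m ≤ -b
  set M : Matrix (Fin N) (Fin N) ℂ := X * Xᴴ with hM
  have hMH : Mᴴ = M := by simp [hM, Matrix.conjTranspose_mul]
  have hbtr : (Xᴴ * X * (Xᴴ * H * X)).trace = (Mᴴ * H * M).trace := by
    rw [show Xᴴ * X * (Xᴴ * H * X) = Xᴴ * (X * (Xᴴ * H * X)) from by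
      simp only [Matrix.mul_assoc]]
    rw [Matrix.trace_mul_comm]
    congr 1
    simp only [hMH, hM, Matrix.mul_assoc, Matrix.conjTranspose_mul, Matrix.conjTranspose_conjTranspose]
  have hMb : c₀ * ((Mᴴ * M).trace.re) ≤ -b := by
    have hXneg : Mᴴ * (-H) * M = -(Mᴴ * H * M) := by
      rw [Matrix.mul_neg, Matrix.neg_mul]
    have htf := trace_form (-H) M
    rw [hXneg, Matrix.trace_neg, Complex.neg_re] at htf
    have hsum : c₀ * ∑ j, n2 (fun i => M i j) ≤ ∑ j, Qf (-H) (fun i => M i j) := by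
      rw [Finset.mul_sum]
      exact Finset.sum_le_sum fun j _ => (hquad _).1
    rw [← htf] at hsum
    rw [hb, hbtr]
    calc c₀ * ((Mᴴ * M).trace.re) = c₀ * ∑ j, n2 (fun i => M i j) := by
          rw [sum_sq_eq_trace, ← sum_n2_cols]
      _ ≤ -(Mᴴ * H * M).trace.re := hsum
  -- ‖X‖⁴ ≤ m * (MᴴM).trace.re
  have hM4 : ‖X‖ ^ 4 ≤ (m:ℝ) * ((Mᴴ * M).trace.re) := by
    set d : Fin m → ℝ := fun j => ((Xᴴ * X) j j).re with hd
    have hsum_d : ∑ j, d j = ‖X‖ ^ 2 := by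
      have := sum_sq_eq_trace X
      rw [norm_sq_eq]
      rw [← this]
      simp [Matrix.trace, Matrix.diag, Complex.re_sum, hd]
    have hcs : (∑ j, d j) ^ 2 ≤ (m:ℝ) * ∑ j, d j ^ 2 := by
      have := sq_sum_le_card_mul_sum_sq (s := (Finset.univ : Finset (Fin m))) (f := d)
      simpa using this
    have hd_sq : ∑ j, d j ^ 2 ≤ ∑ j, ∑ l, ‖(Xᴴ * X) j l‖ ^ 2 := by
      refine Finset.sum_le_sum fun j _ => ?_
      calc d j ^ 2 ≤ ‖(Xᴴ * X) j j‖ ^ 2 := by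
            rw [hd]
            have := Complex.abs_re_le_norm ((Xᴴ * X) j j)
            show ((Xᴴ * X) j j).re ^ 2 ≤ ‖(Xᴴ * X) j j‖ ^ 2
            nlinarith [this, abs_nonneg (((Xᴴ * X) j j).re),
              sq_abs (((Xᴴ * X) j j).re)]
        _ ≤ ∑ l, ‖(Xᴴ * X) j l‖ ^ 2 :=
            Finset.single_le_sum (f := fun l => ‖(Xᴴ * X) j l‖ ^ 2)
              (fun _ _ => by positivity) (Finset.mem_univ j)
    have htr_eq : ∑ j, ∑ l, ‖(Xᴴ * X) j l‖ ^ 2 = (Mᴴ * M).trace.re := by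
      rw [← sum_sq_eq_trace (Xᴴ * X)]
      have h5 : (Xᴴ * X)ᴴ * (Xᴴ * X) = Xᴴ * (X * Xᴴ * X) := by
        simp [Matrix.conjTranspose_mul, Matrix.mul_assoc]
      have h6 : Mᴴ * M = X * (Xᴴ * (X * Xᴴ)) := by
        simp [hMH, hM, Matrix.mul_assoc]
      rw [h5, h6, Matrix.trace_mul_comm]
      congr 2
      simp [Matrix.mul_assoc]
    calc ‖X‖ ^ 4 = (‖X‖ ^ 2) ^ 2 := by ring
      _ = (∑ j, d j) ^ 2 := by rw [hsum_d]
      _ ≤ (m:ℝ) * ∑ j, d j ^ 2 := hcs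
      _ ≤ (m:ℝ) * ∑ j, ∑ l, ‖(Xᴴ * X) j l‖ ^ 2 := by
          have := hd_sq; nlinarith
      _ = (m:ℝ) * ((Mᴴ * M).trace.re) := by rw [htr_eq]
  -- combine
  have hkey : 4 * c₀ * ‖X‖ ^ 4 ≤ (m:ℝ) * (4 * c₁ * ‖X‖ ^ 2 + L * ‖X‖) := by
    have h4b : -(4*b) ≤ -(4*a) + μ * L * ‖X‖ := by
      have := abs_le.mp h1
      linarith [this.1]
    have hμL : μ * L * ‖X‖ ≤ L * ‖X‖ := by
      have hL0 : (0:ℝ) ≤ L := by positivity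
      have h0 : μ * L ≤ L := by nlinarith
      exact mul_le_mul_of_nonneg_right h0 (norm_nonneg X)
    have hstep : c₀ * (‖X‖^4 / (m:ℝ)) ≤ -b := by
      calc c₀ * (‖X‖^4 / (m:ℝ)) ≤ c₀ * ((Mᴴ * M).trace.re) := by
            have h7 : ‖X‖^4 / (m:ℝ) ≤ (Mᴴ * M).trace.re := by
              rw [div_le_iff₀ hm']
              nlinarith [hM4]
            nlinarith
        _ ≤ -b := hMb
    have h8 : -(4*a) ≤ 4 * c₁ * ‖X‖^2 := by linarith [ha']
    have h9 : 4 * (c₀ * (‖X‖^4 / (m:ℝ))) ≤ 4 * c₁ * ‖X‖^2 + L * ‖X‖ := by linarith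
    have h10 : 4 * c₀ * ‖X‖^4 / (m:ℝ) ≤ 4 * c₁ * ‖X‖^2 + L * ‖X‖ := by
      rw [show 4 * c₀ * ‖X‖^4 / (m:ℝ) = 4 * (c₀ * (‖X‖^4 / (m:ℝ))) by ring]
      exact h9
    rw [div_le_iff₀ hm'] at h10
    calc 4 * c₀ * ‖X‖ ^ 4 ≤ (4 * c₁ * ‖X‖^2 + L * ‖X‖) * (m:ℝ) := h10
      _ = (m:ℝ) * (4 * c₁ * ‖X‖ ^ 2 + L * ‖X‖) := by ring
  -- conclude
  by_contra hcon
  push_neg at hcon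
  set R₁ := Real.sqrt ((m : ℝ) * (4 * c₁ + L) / (4 * c₀)) with hR₁
  have hX1 : 1 < ‖X‖ := lt_of_le_of_lt (le_max_left _ _) hcon
  have hXR₁ : R₁ < ‖X‖ := lt_of_le_of_lt (le_max_right _ _) hcon
  have hsq : (m : ℝ) * (4 * c₁ + L) / (4 * c₀) < ‖X‖ ^ 2 := by
    have hXpos : (0:ℝ) < ‖X‖ := by linarith
    rw [hR₁] at hXR₁
    exact (Real.sqrt_lt' hXpos).mp hXR₁
  have hL0 : (0:ℝ) ≤ L := by rw [hL]; positivity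
  have hXpos : (0:ℝ) < ‖X‖ := by linarith
  have e1 : ‖X‖ ≤ ‖X‖ ^ 2 := by
    calc ‖X‖ = ‖X‖ * 1 := (mul_one _).symm
      _ ≤ ‖X‖ * ‖X‖ := mul_le_mul_of_nonneg_left hX1.le hXpos.le
      _ = ‖X‖ ^ 2 := (sq ‖X‖).symm
  have e2 : (m:ℝ) * (4*c₁*‖X‖^2 + L*‖X‖) ≤ (m:ℝ) * ((4*c₁ + L) * ‖X‖^2) := by
    have h0 : 4*c₁*‖X‖^2 + L*‖X‖ ≤ (4*c₁+L)*‖X‖^2 := by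
      have := mul_le_mul_of_nonneg_left e1 hL0
      nlinarith [this]
    exact mul_le_mul_of_nonneg_left h0 hm'.le
  have e3 : (m:ℝ) * (4*c₁ + L) < 4*c₀*‖X‖^2 := by
    rw [div_lt_iff₀ (by linarith : (0:ℝ) < 4*c₀)] at hsq
    linarith
  have e4 : (m:ℝ) * ((4*c₁+L) * ‖X‖^2) < 4*c₀*‖X‖^2*‖X‖^2 := by
    have := mul_lt_mul_of_pos_right e3 (by positivity : (0:ℝ) < ‖X‖^2)
    calc (m:ℝ) * ((4*c₁+L) * ‖X‖^2) = (m:ℝ) * (4*c₁+L) * ‖X‖^2 := by ring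
      _ < 4*c₀*‖X‖^2*‖X‖^2 := this
  have e5 : 4*c₀*‖X‖^2*‖X‖^2 = 4*c₀*‖X‖^4 := by ring
  rw [e5] at e4
  linarith [hkey, e2, e4]

end bounded

/-- Local minimizers of `E_μ` are generated by critical points of `E₀`: for every
`ε > 0` there is `δ > 0` such that for `0 ≤ μ < δ`, every local minimizer of `E_μ`
is within `ε` of the critical set of `E₀`. -/
theorem stmt18 {N m : ℕ} (hN : 0 < N) (hm : 0 < m) (hmN : m ≤ N)
    (H : Matrix (Fin N) (Fin N) ℂ) (hH : H.IsHermitian) (hneg : (-H).PosDef) :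
    ∀ ε > (0 : ℝ), ∃ δ > (0 : ℝ), ∀ μ : ℝ, 0 ≤ μ → μ < δ →
      ∀ X : Matrix (Fin N) (Fin m) ℂ, IsLocalMin (Emu H μ) X →
        Metric.infDist X
          {Y : Matrix (Fin N) (Fin m) ℂ | fderiv ℝ (E0 H) Y = 0} < ε := by
  intro ε hε
  letI := clmNAG (N := N) (m := m)
  obtain ⟨c₀, hc₀, c₁, hquad⟩ := quad_bounds hN (-H) hneg
  set L : ℝ := (N * m : ℝ) with hL
  set R : ℝ := max 1 (Real.sqrt ((m : ℝ) * (4 * c₁ + L) / (4 * c₀))) with hR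
  set Crit : Set (Matrix (Fin N) (Fin m) ℂ) :=
    {Y | fderiv ℝ (E0 H) Y = 0} with hCrit
  have hL0 : 0 < L := by
    rw [hL]
    have : (0:ℕ) < N * m := Nat.mul_pos hN hm
    exact_mod_cast this
  have hgcont : Continuous fun Y : Matrix (Fin N) (Fin m) ℂ => ‖fderiv ℝ (E0 H) Y‖ :=
    ((contDiff_E0 H).continuous_fderiv one_ne_zero).norm
  set A : Set (Matrix (Fin N) (Fin m) ℂ) :=
    Metric.closedBall 0 R ∩ {Y | ε ≤ Metric.infDist Y Crit} with hA
  have hAcomp : IsCompact A := by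
    refine (isCompact_closedBall 0 R).inter_right ?_
    exact isClosed_le continuous_const (Metric.continuous_infDist_pt Crit)
  by_cases hAne : A.Nonempty
  · obtain ⟨Y₀, hY₀A, hminA⟩ := hAcomp.exists_isMinOn hAne hgcont.continuousOn
    have hη : 0 < ‖fderiv ℝ (E0 H) Y₀‖ := by
      rcases (norm_nonneg (fderiv ℝ (E0 H) Y₀)).lt_or_eq with h | h
      · exact h
      · exfalso
        have hY₀Crit : Y₀ ∈ Crit := by
          rw [hCrit, Set.mem_setOf_eq, ← norm_eq_zero]
          exact h.symm
        have h0 : Metric.infDist Y₀ Crit = 0 := Metric.infDist_zero_of_mem hY₀Crit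
        have := hY₀A.2
        rw [Set.mem_setOf_eq, h0] at this
        linarith
    refine ⟨min 1 (‖fderiv ℝ (E0 H) Y₀‖ / L), by positivity, fun μ hμ0 hμδ X hX => ?_⟩
    have hμ1 : μ ≤ 1 := le_of_lt (lt_of_lt_of_le hμδ (min_le_left _ _))
    have hXR : ‖X‖ ≤ R := minimizer_bound hN hm H hc₀ hquad μ hμ0 hμ1 X hX
    by_contra hcon
    push_neg at hcon
    have hXA : X ∈ A := by
      constructor
      · rwa [Metric.mem_closedBall, dist_zero_right]
      · exact hcon
    have hmono := hminA hXA
    simp only [Set.mem_setOf_eq] at hmono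
    have hgb := grad_bound H μ hμ0 X hX
    have hμs : μ < ‖fderiv ℝ (E0 H) Y₀‖ / L := lt_of_lt_of_le hμδ (min_le_right _ _)
    have hthis : μ * L < ‖fderiv ℝ (E0 H) Y₀‖ := (lt_div_iff₀ hL0).mp hμs
    rw [hL] at hthis
    linarith [hmono, hgb]
  · refine ⟨1, one_pos, fun μ hμ0 hμδ X hX => ?_⟩
    have hXR : ‖X‖ ≤ R := minimizer_bound hN hm H hc₀ hquad μ hμ0 hμδ.le X hX
    by_contra hcon
    push_neg at hcon
    exact hAne ⟨X, ⟨by rwa [Metric.mem_closedBall, dist_zero_right], hcon⟩⟩
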